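/- Let n, N ≥ 1 and let A be a skew-symmetric n×n real matrix (Aᵀ = −A). Let F_1, …, F_N : (ℝ^n)^N → ℝ^n be differentiable maps, each satisfying the joint equivariance equation for A. Then the function ψ : (ℝ^n)^N → ℝ defined by ψ(X) = Σ_{i=1}^N ‖F_i(X)‖², where ‖·‖ is the Euclidean norm, is jointly radial for A: for every X = (X_1,…,X_N), the derivative of ψ at X evaluated at (A·X_1, …, A·X_N) is zero. -/

import Mathlib

lemma skew_quad (n : ℕ) (A : Matrix (Fin n) (Fin n) ℝ) (hA : A.transpose = -A)
    (u : Fin n → ℝ) : ∑ j, u j * A.mulVec u j = 0 := by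
  have h : ∑ j, u j * A.mulVec u j = ∑ j, ∑ k, u j * (A j k * u k) := by
    simp [Matrix.mulVec, dotProduct, Finset.mul_sum]
  have hAe : ∀ j k, A j k = -(A k j) := by
    intro j k
    have := congrFun (congrFun hA k) j
    simpa [Matrix.transpose_apply] using this
  have h2 : ∑ j, ∑ k, u j * (A j k * u k) = -∑ j, ∑ k, u j * (A j k * u k) := by
    calc ∑ j, ∑ k, u j * (A j k * u k) = ∑ k, ∑ j, u j * (A j k * u k) := Finset.sum_comm
      _ = ∑ k, ∑ j, -(u k * (A k j * u j)) := by
          refine Finset.sum_congr rfl fun k _ => Finset.sum_congr rfl fun j _ => ?_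
          rw [hAe j k]; ring
      _ = -∑ j, ∑ k, u j * (A j k * u k) := by simp
  have : ∑ j, ∑ k, u j * (A j k * u k) = 0 := by linarith
  rw [h, this]

/-- If `A` is skew-symmetric and each differentiable
`F_i : (ℝ^n)^N → ℝ^n` satisfies the joint equivariance equation for `A`, then
`ψ(X) = Σ_i ‖F_i(X)‖²` (squared Euclidean norms) is jointly radial for `A`:
its derivative at `X` in the direction `(A·X_1, …, A·X_N)` vanishes. -/
theorem stmt_7 (n N : ℕ) (hn : 1 ≤ n) (hN : 1 ≤ N)
    (A : Matrix (Fin n) (Fin n) ℝ) (hA : A.transpose = -A)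
    (F : Fin N → (Fin N → Fin n → ℝ) → (Fin n → ℝ))
    (hF_diff : ∀ i, Differentiable ℝ (F i))
    (hF_equiv : ∀ i, ∀ X : Fin N → Fin n → ℝ,
      fderiv ℝ (F i) X (fun k => A.mulVec (X k)) = A.mulVec (F i X)) :
    ∀ X : Fin N → Fin n → ℝ,
      fderiv ℝ (fun Y : Fin N → Fin n → ℝ => ∑ i, ∑ j, (F i Y j) ^ 2) X
        (fun k => A.mulVec (X k)) = 0 := by
  intro X
  have hcomp : ∀ (i : Fin N) (j : Fin n),
      HasFDerivAt (fun Y => F i Y j)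
        ((ContinuousLinearMap.proj j).comp (fderiv ℝ (F i) X)) X := by
    intro i j
    exact (ContinuousLinearMap.proj j).hasFDerivAt.comp X ((hF_diff i).differentiableAt.hasFDerivAt)
  have hsq : ∀ (i : Fin N) (j : Fin n),
      HasFDerivAt (fun Y => (F i Y j) ^ 2)
        ((2 * F i X j) • ((ContinuousLinearMap.proj j).comp (fderiv ℝ (F i) X))) X := by
    intro i j
    have h := (hcomp i j).mul (hcomp i j)
    simpa [pow_two, two_mul, add_smul, Pi.mul_def] using h
  have hsum : HasFDerivAt (fun Y : Fin N → Fin n → ℝ => ∑ i, ∑ j, (F i Y j) ^ 2)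
      (∑ i, ∑ j, (2 * F i X j) • ((ContinuousLinearMap.proj j).comp (fderiv ℝ (F i) X))) X := by
    refine HasFDerivAt.fun_sum fun i _ => HasFDerivAt.fun_sum fun j _ => hsq i j
  rw [hsum.fderiv]
  simp only [ContinuousLinearMap.sum_apply, ContinuousLinearMap.smul_apply,
    ContinuousLinearMap.comp_apply, ContinuousLinearMap.proj_apply]
  have : ∀ i : Fin N,
      ∑ j, 2 * F i X j * (fderiv ℝ (F i) X (fun k => A.mulVec (X k)) j) = 0 := by
    intro i
    rw [hF_equiv i X]
    have := skew_quad n A hA (F i X)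
    calc ∑ j, 2 * F i X j * A.mulVec (F i X) j
        = 2 * ∑ j, F i X j * A.mulVec (F i X) j := by
          rw [Finset.mul_sum]; exact Finset.sum_congr rfl fun j _ => by ring
      _ = 0 := by rw [this]; ring
  simp [this]
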